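/- Let (X, d) be a metric space with d(x, y) ≤ D for all x, y ∈ X (D ≥ 0), let x_1, …, x_n ∈ X, let S ⊆ X be a nonempty finite set containing x_1, …, x_n, let ε > 0, and let ℓ_1, …, ℓ_n : X → ℝ each be ω₂-Lipschitz with respect to d (ω₂ > 0). Define A(λ) = λε + (1/n)·Σ_{i=1}^n sup_{x ∈ X} [ℓ_i(x) − λ·d(x, x_i)²] and B(λ) = λε + (1/n)·Σ_{i=1}^n max_{x ∈ S} [ℓ_i(x) − λ·d(x, x_i)²] for λ ≥ 0. Suppose λ_n ≥ 0 satisfies B(λ_n) = inf_{λ ≥ 0} B(λ); suppose for each i there exists T_i ∈ X attaining sup_{x ∈ X} [ℓ_i(x) − λ_n·d(x, x_i)²]; and suppose for each i there exists x_i* ∈ S with d(x_i*, T_i) ≤ r for some r ≥ 0. Then 0 ≤ inf_{λ ≥ 0} A(λ) − inf_{λ ≥ 0} B(λ) ≤ r·(ω₂ + 2·ω₂·D/√ε). -/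

import Mathlib

/-- Combined deterministic bound of Theorem 3.1 (th.stats): the gap between the
dual value of the unrestricted distributionally robust loss and that of the
restricted loss is between `0` and `r (ω₂ + 2 ω₂ D / √ε)`. -/
theorem stmt_9 {X : Type*} [MetricSpace X] (D : ℝ) (hD : 0 ≤ D)
    (hdiam : ∀ x y : X, dist x y ≤ D)
    (n : ℕ) (hn : 0 < n) (xs : Fin n → X)
    (S : Finset X) (hS : S.Nonempty) (hxs : ∀ i, xs i ∈ S)
    (ε : ℝ) (hε : 0 < ε)
    (ω₂ : ℝ) (hω₂ : 0 < ω₂) (ℓ : Fin n → X → ℝ)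
    (hlip : ∀ i, ∀ u v : X, |ℓ i u - ℓ i v| ≤ ω₂ * dist u v)
    (A B : ℝ → ℝ)
    (hA : ∀ lam, A lam =
      lam * ε + (1 / n) * ∑ i, ⨆ x : X, (ℓ i x - lam * dist x (xs i) ^ 2))
    (hB : ∀ lam, B lam =
      lam * ε + (1 / n) * ∑ i, S.sup' hS (fun x => ℓ i x - lam * dist x (xs i) ^ 2))
    (lamn : ℝ) (hlamn0 : 0 ≤ lamn)
    (hlamn : B lamn = ⨅ lam : Set.Ici (0 : ℝ), B lam.1)
    (T : Fin n → X)
    (hT : ∀ i, (⨆ x : X, (ℓ i x - lamn * dist x (xs i) ^ 2)) =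
      ℓ i (T i) - lamn * dist (T i) (xs i) ^ 2)
    (r : ℝ) (hr : 0 ≤ r)
    (hclose : ∀ i, ∃ xstar ∈ S, dist xstar (T i) ≤ r) :
    0 ≤ (⨅ lam : Set.Ici (0 : ℝ), A lam.1) - (⨅ lam : Set.Ici (0 : ℝ), B lam.1) ∧
      (⨅ lam : Set.Ici (0 : ℝ), A lam.1) - (⨅ lam : Set.Ici (0 : ℝ), B lam.1) ≤
        r * (ω₂ + 2 * ω₂ * D / Real.sqrt ε) := by
  have hε' : (0:ℝ) < Real.sqrt ε := Real.sqrt_pos.2 hε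
  have hn' : (0:ℝ) < (n:ℝ) := by exact_mod_cast hn
  set μ : ℝ := ω₂ / Real.sqrt ε with hμdef
  have hμ : 0 < μ := div_pos hω₂ hε'
  haveI : Nonempty (Set.Ici (0:ℝ)) := ⟨⟨0, Set.mem_Ici.2 le_rfl⟩⟩
  -- boundedness of the unrestricted sup
  have hfbdd : ∀ (i : Fin n) (lam : ℝ), 0 ≤ lam →
      BddAbove (Set.range fun x : X => ℓ i x - lam * dist x (xs i) ^ 2) := by
    intro i lam hlam
    refine ⟨ℓ i (xs i) + ω₂ * D, ?_⟩
    rintro _ ⟨x, rfl⟩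
    have h1 : ℓ i x - ℓ i (xs i) ≤ ω₂ * dist x (xs i) := (abs_le.1 (hlip i x (xs i))).2
    have h2 : ω₂ * dist x (xs i) ≤ ω₂ * D :=
      mul_le_mul_of_nonneg_left (hdiam _ _) hω₂.le
    have h3 : 0 ≤ lam * dist x (xs i) ^ 2 := by positivity
    simp only []
    linarith
  -- restricted sup ≤ unrestricted sup
  have hsup : ∀ (i : Fin n) (lam : ℝ), 0 ≤ lam →
      S.sup' hS (fun x => ℓ i x - lam * dist x (xs i) ^ 2) ≤
        ⨆ x : X, (ℓ i x - lam * dist x (xs i) ^ 2) := by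
    intro i lam hlam
    exact Finset.sup'_le _ _ fun x _ => le_ciSup (hfbdd i lam hlam) x
  -- lower bound on the restricted sup
  have hsuplow : ∀ (i : Fin n) (lam : ℝ),
      ℓ i (xs i) ≤ S.sup' hS (fun x => ℓ i x - lam * dist x (xs i) ^ 2) := by
    intro i lam
    have h := Finset.le_sup' (fun x => ℓ i x - lam * dist x (xs i) ^ 2) (hxs i)
    calc ℓ i (xs i) = ℓ i (xs i) - lam * dist (xs i) (xs i) ^ 2 := by simp
      _ ≤ _ := h
  -- B ≤ A pointwise on λ ≥ 0
  have hBA : ∀ lam : ℝ, 0 ≤ lam → B lam ≤ A lam := by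
    intro lam hlam
    rw [hA, hB]
    have h1 : ∑ i, S.sup' hS (fun x => ℓ i x - lam * dist x (xs i) ^ 2) ≤
        ∑ i, ⨆ x : X, (ℓ i x - lam * dist x (xs i) ^ 2) :=
      Finset.sum_le_sum fun i _ => hsup i lam hlam
    have h2 : (0:ℝ) ≤ 1/(n:ℝ) := by positivity
    nlinarith [mul_le_mul_of_nonneg_left h1 h2]
  set m : ℝ := (1/(n:ℝ)) * ∑ i, ℓ i (xs i) with hm
  have hBlow : ∀ lam : ℝ, 0 ≤ lam → m ≤ B lam := by
    intro lam hlam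
    rw [hB, hm]
    have h1 : ∑ i, ℓ i (xs i) ≤
        ∑ i, S.sup' hS (fun x => ℓ i x - lam * dist x (xs i) ^ 2) :=
      Finset.sum_le_sum fun i _ => hsuplow i lam
    have h2 : (0:ℝ) ≤ 1/(n:ℝ) := by positivity
    have h3 : 0 ≤ lam * ε := by positivity
    nlinarith [mul_le_mul_of_nonneg_left h1 h2]
  have hBddB : BddBelow (Set.range fun lam : Set.Ici (0:ℝ) => B lam.1) := by
    refine ⟨m, ?_⟩
    rintro _ ⟨⟨lam, hlam⟩, rfl⟩
    exact hBlow lam hlam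
  have hBddA : BddBelow (Set.range fun lam : Set.Ici (0:ℝ) => A lam.1) := by
    refine ⟨m, ?_⟩
    rintro _ ⟨⟨lam, hlam⟩, rfl⟩
    exact (hBlow lam hlam).trans (hBA lam hlam)
  have hpart1 : (⨅ lam : Set.Ici (0:ℝ), B lam.1) ≤ ⨅ lam : Set.Ici (0:ℝ), A lam.1 :=
    ciInf_mono hBddB fun lam => hBA lam.1 lam.2
  -- the key bound λₙ ≤ ω₂ / √ε
  have hlamn_le : lamn ≤ μ := by
    by_contra hcon
    push_neg at hcon
    set lam : ℝ := (lamn + μ) / 2 with hlamdef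
    have h0 : 0 < lam := by rw [hlamdef]; linarith
    have hlt : lam < lamn := by rw [hlamdef]; linarith
    have hμlt : μ < lam := by rw [hlamdef]; linarith
    choose xh hxhmem hxh using fun i => Finset.exists_mem_eq_sup' hS
      (fun x => ℓ i x - lam * dist x (xs i) ^ 2)
    have hd1 : ∀ i, lam * dist (xh i) (xs i) ^ 2 ≤ ω₂ * dist (xh i) (xs i) := by
      intro i
      have h1 : ℓ i (xs i) - lam * dist (xs i) (xs i) ^ 2 ≤
          ℓ i (xh i) - lam * dist (xh i) (xs i) ^ 2 := by
        rw [← hxh i]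
        exact Finset.le_sup' (fun x => ℓ i x - lam * dist x (xs i) ^ 2) (hxs i)
      have h2 : ℓ i (xh i) - ℓ i (xs i) ≤ ω₂ * dist (xh i) (xs i) :=
        (abs_le.1 (hlip i _ _)).2
      simp only [dist_self] at h1
      nlinarith
    have hd2 : ∀ i, dist (xh i) (xs i) ^ 2 ≤ ω₂ ^ 2 / lam ^ 2 := by
      intro i
      have hdd : 0 ≤ dist (xh i) (xs i) := dist_nonneg
      have hle : lam * dist (xh i) (xs i) ≤ ω₂ := by
        rcases eq_or_lt_of_le hdd with h | h
        · rw [← h]; simpa using hω₂.le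
        · nlinarith [hd1 i]
      have hdd2 : dist (xh i) (xs i) ≤ ω₂ / lam := by
        rw [le_div_iff₀ h0]; linarith [hle]
      have h4 : (0:ℝ) < lam ^ 2 := by positivity
      rw [le_div_iff₀ h4]
      nlinarith [hle, mul_nonneg hdd (le_of_lt h0)]
    have hg : ∀ i, S.sup' hS (fun x => ℓ i x - lam * dist x (xs i) ^ 2)
        - (lamn - lam) * dist (xh i) (xs i) ^ 2 ≤
        S.sup' hS (fun x => ℓ i x - lamn * dist x (xs i) ^ 2) := by
      intro i
      have h1 : ℓ i (xh i) - lamn * dist (xh i) (xs i) ^ 2 ≤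
          S.sup' hS (fun x => ℓ i x - lamn * dist x (xs i) ^ 2) :=
        Finset.le_sup' (fun x => ℓ i x - lamn * dist x (xs i) ^ 2) (hxhmem i)
      rw [hxh i]
      linarith
    have hBlam : B lamn ≤ B lam := by
      rw [hlamn]
      exact ciInf_le hBddB ⟨lam, h0.le⟩
    have hsum : ∑ i, S.sup' hS (fun x => ℓ i x - lam * dist x (xs i) ^ 2)
        - (lamn - lam) * ∑ i, dist (xh i) (xs i) ^ 2 ≤
        ∑ i, S.sup' hS (fun x => ℓ i x - lamn * dist x (xs i) ^ 2) := by
      have h := Finset.sum_le_sum fun i (_ : i ∈ Finset.univ) => hg i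
      rw [Finset.sum_sub_distrib, ← Finset.mul_sum] at h
      exact h
    have hDsum : ∑ i, dist (xh i) (xs i) ^ 2 ≤ (n:ℝ) * (ω₂ ^ 2 / lam ^ 2) := by
      calc ∑ i, dist (xh i) (xs i) ^ 2 ≤ ∑ _i : Fin n, ω₂ ^ 2 / lam ^ 2 :=
            Finset.sum_le_sum fun i _ => hd2 i
        _ = (n:ℝ) * (ω₂ ^ 2 / lam ^ 2) := by
            rw [Finset.sum_const, Finset.card_univ, Fintype.card_fin, nsmul_eq_mul]
    have hεle : ε ≤ ω₂ ^ 2 / lam ^ 2 := by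
      have e1 := hB lamn
      have e2 := hB lam
      have e3 : lamn * ε + (1/(n:ℝ)) *
          ∑ i, S.sup' hS (fun x => ℓ i x - lamn * dist x (xs i) ^ 2) ≤
          lam * ε + (1/(n:ℝ)) *
          ∑ i, S.sup' hS (fun x => ℓ i x - lam * dist x (xs i) ^ 2) := by
        rw [← e1, ← e2]; exact hBlam
      have e4 := mul_le_mul_of_nonneg_left hsum (by positivity : (0:ℝ) ≤ 1/(n:ℝ))
      rw [mul_sub] at e4
      have e5 : (lamn - lam) * ε ≤
          (lamn - lam) * ((1/(n:ℝ)) * ∑ i, dist (xh i) (xs i) ^ 2) := by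
        linarith [e3, e4]
      have e6 : ε ≤ (1/(n:ℝ)) * ∑ i, dist (xh i) (xs i) ^ 2 :=
        le_of_mul_le_mul_left e5 (by linarith : (0:ℝ) < lamn - lam)
      have e7 : (1/(n:ℝ)) * ∑ i, dist (xh i) (xs i) ^ 2 ≤
          (1/(n:ℝ)) * ((n:ℝ) * (ω₂ ^ 2 / lam ^ 2)) :=
        mul_le_mul_of_nonneg_left hDsum (by positivity)
      have e8 : (1/(n:ℝ)) * ((n:ℝ) * (ω₂ ^ 2 / lam ^ 2)) = ω₂ ^ 2 / lam ^ 2 := by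
        field_simp
      linarith
    -- contradiction
    have h1 : ε * lam ^ 2 ≤ ω₂ ^ 2 := by
      have h4 : (0:ℝ) < lam ^ 2 := by positivity
      exact (le_div_iff₀ h4).1 hεle
    have h2 : ω₂ < lam * Real.sqrt ε := (div_lt_iff₀ hε').1 hμlt
    have h3 : Real.sqrt ε ^ 2 = ε := Real.sq_sqrt hε.le
    have p1 := mul_lt_mul_of_pos_left h2 hω₂
    have p2 := mul_lt_mul_of_pos_left h2 (mul_pos h0 hε')
    have h3' : lam ^ 2 * Real.sqrt ε ^ 2 = lam ^ 2 * ε := by rw [h3]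
    linarith only [h1, h3', p1, p2]
  -- per-sample gap bound at λₙ
  have hgap : ∀ i : Fin n, (⨆ x : X, (ℓ i x - lamn * dist x (xs i) ^ 2)) -
      S.sup' hS (fun x => ℓ i x - lamn * dist x (xs i) ^ 2) ≤
      ω₂ * r + lamn * (2 * D * r) := by
    intro i
    obtain ⟨xst, hxstS, hxstr⟩ := hclose i
    have h1 : ℓ i xst - lamn * dist xst (xs i) ^ 2 ≤
        S.sup' hS (fun x => ℓ i x - lamn * dist x (xs i) ^ 2) :=
      Finset.le_sup' (fun x => ℓ i x - lamn * dist x (xs i) ^ 2) hxstS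
    rw [hT i]
    have h2 : ℓ i (T i) - ℓ i xst ≤ ω₂ * dist (T i) xst := (abs_le.1 (hlip i _ _)).2
    have h3 : dist (T i) xst ≤ r := by rw [dist_comm]; exact hxstr
    have h4 : ω₂ * dist (T i) xst ≤ ω₂ * r := mul_le_mul_of_nonneg_left h3 hω₂.le
    have hab : dist xst (xs i) - dist (T i) (xs i) ≤ r := by
      have ht := abs_dist_sub_le xst (T i) (xs i)
      have := (abs_le.1 ht).2
      linarith
    have haD : dist xst (xs i) ≤ D := hdiam _ _
    have hbD : dist (T i) (xs i) ≤ D := hdiam _ _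
    have ha0 : (0:ℝ) ≤ dist xst (xs i) := dist_nonneg
    have hb0 : (0:ℝ) ≤ dist (T i) (xs i) := dist_nonneg
    have hsq : dist xst (xs i) ^ 2 - dist (T i) (xs i) ^ 2 ≤ 2 * D * r := by
      have p1 := mul_le_mul_of_nonneg_left hab
          (by linarith : (0:ℝ) ≤ dist xst (xs i) + dist (T i) (xs i))
      have p2 := mul_le_mul_of_nonneg_right
          (by linarith : dist xst (xs i) + dist (T i) (xs i) ≤ 2 * D) hr
      have hring : (dist xst (xs i) + dist (T i) (xs i)) *
          (dist xst (xs i) - dist (T i) (xs i)) =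
          dist xst (xs i) ^ 2 - dist (T i) (xs i) ^ 2 := by ring
      linarith only [p1, p2, hring]
    have h5 : lamn * (dist xst (xs i) ^ 2 - dist (T i) (xs i) ^ 2) ≤
        lamn * (2 * D * r) := mul_le_mul_of_nonneg_left hsq hlamn0
    rw [mul_sub] at h5
    linarith
  -- A λₙ ≤ B λₙ + c
  have hAn : A lamn ≤ B lamn + (ω₂ * r + lamn * (2 * D * r)) := by
    rw [hA, hB]
    have hsum := Finset.sum_le_sum fun i (_ : i ∈ Finset.univ) => hgap i
    rw [Finset.sum_sub_distrib, Finset.sum_const, Finset.card_univ, Fintype.card_fin,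
      nsmul_eq_mul] at hsum
    have h2 := mul_le_mul_of_nonneg_left hsum (by positivity : (0:ℝ) ≤ 1/(n:ℝ))
    rw [mul_sub] at h2
    have h3 : (1/(n:ℝ)) * ((n:ℝ) * (ω₂ * r + lamn * (2 * D * r))) =
        ω₂ * r + lamn * (2 * D * r) := by field_simp
    linarith
  have hfinal : (⨅ lam : Set.Ici (0:ℝ), A lam.1) ≤
      (⨅ lam : Set.Ici (0:ℝ), B lam.1) + (ω₂ * r + lamn * (2 * D * r)) := by
    refine le_trans (ciInf_le hBddA ⟨lamn, hlamn0⟩) ?_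
    rw [← hlamn]
    exact hAn
  have hc : ω₂ * r + lamn * (2 * D * r) ≤ r * (ω₂ + 2 * ω₂ * D / Real.sqrt ε) := by
    have h1 : lamn * (2 * D * r) ≤ μ * (2 * D * r) :=
      mul_le_mul_of_nonneg_right hlamn_le (by positivity)
    have h2 : μ * (2 * D * r) = r * (2 * ω₂ * D / Real.sqrt ε) := by
      rw [hμdef]; field_simp
    have h3 : r * (ω₂ + 2 * ω₂ * D / Real.sqrt ε) =
        ω₂ * r + r * (2 * ω₂ * D / Real.sqrt ε) := by ring
    linarith
  constructor
  · linarith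
  · linarith
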